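/- Let V be a finite-dimensional real inner product space, let G be a finite subgroup of the orthogonal group O(V) with no nonzero fixed vectors (V^G = {0}), and let L be a one-dimensional linear subspace of V with setwise stabilizer Γ = {g ∈ G : g(L) = L}. Let V_ℂ and L_ℂ be the complexifications, with the G-action extended ℂ-linearly. Then the restriction homomorphism ℂ[V_ℂ]^G → ℂ[L_ℂ]^Γ between invariant algebras of polynomial functions is surjective if and only if Γ acts nontrivially on L (in which case every nontrivial element of Γ|_L acts as −1). -/

import Mathlib

open scoped TensorProduct

/-- The algebra of polynomial functions on a complex vector space `V`: the subalgebra of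
`V → ℂ` generated by the linear functionals. -/
noncomputable def polyFuns (V : Type*) [AddCommGroup V] [Module ℂ V] : Subalgebra ℂ (V → ℂ) :=
  Algebra.adjoin ℂ {f : V → ℂ | ∃ φ : V →ₗ[ℂ] ℂ, ⇑φ = f}

/-- Restriction of functions to a subset, as an algebra homomorphism. -/
def resAlg {V : Type*} (S : Set V) : (V → ℂ) →ₐ[ℂ] (S → ℂ) where
  toFun f x := f x
  map_one' := rfl
  map_mul' _ _ := rfl
  map_zero' := rfl
  map_add' _ _ := rfl
  commutes' _ := rfl

/-- The subalgebra of functions on the subset `S` that are invariant under a family `T` of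
transformations of the ambient space (each of which maps `S` into itself). -/
def invFns {X : Type*} (T : Set (X → X)) (S : Set X) : Subalgebra ℂ (S → ℂ) where
  carrier := {f | ∀ t ∈ T, ∀ x y : S, t x = (y : X) → f y = f x}
  mul_mem' := by
    intro f₁ f₂ h₁ h₂ t ht x y hxy
    simp only [Pi.mul_apply, h₁ t ht x y hxy, h₂ t ht x y hxy]
  add_mem' := by
    intro f₁ f₂ h₁ h₂ t ht x y hxy
    simp only [Pi.add_apply, h₁ t ht x y hxy, h₂ t ht x y hxy]
  one_mem' := by intro t ht x y hxy; rfl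
  zero_mem' := by intro t ht x y hxy; rfl
  algebraMap_mem' := by intro r t ht x y hxy; rfl

private lemma coeff_comp_neg_X (q : Polynomial ℂ) (k : ℕ) :
    (q.comp (-Polynomial.X)).coeff k = (-1) ^ k * q.coeff k := by
  induction q using Polynomial.induction_on' with
  | add p r hp hr =>
    simp [Polynomial.add_comp, hp, hr, mul_add]
  | monomial n a =>
    have hC : ((-1 : Polynomial ℂ)) ^ n = Polynomial.C ((-1 : ℂ) ^ n) := by
      rw [map_pow, map_neg, map_one]
    rw [Polynomial.monomial_comp, neg_pow, hC, Polynomial.coeff_C_mul, Polynomial.coeff_C_mul,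
      Polynomial.coeff_X_pow, Polynomial.coeff_monomial]
    rcases eq_or_ne n k with rfl | hk
    · simp [mul_comm]
    · simp [hk, Ne.symm hk]

set_option synthInstance.maxHeartbeats 1000000 in
set_option maxHeartbeats 1000000 in
/-- Let `V` be a finite-dimensional real inner product space, `G` a finite
subgroup of `O(V)` with `V^G = {0}`, and `L` a one-dimensional subspace with setwise
stabilizer `Γ = {g ∈ G : g(L) = L}`.  Then the restriction homomorphism
`ℂ[V_ℂ]^G → ℂ[L_ℂ]^Γ` between the invariant algebras of polynomial functions on the
complexifications is surjective if and only if `Γ` acts nontrivially on `L`. -/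
theorem dim_one_restriction_surjective_iff
    {V : Type*} [NormedAddCommGroup V] [InnerProductSpace ℝ V] [FiniteDimensional ℝ V]
    (G : Subgroup (V ≃ₗᵢ[ℝ] V)) (hGfin : (G : Set (V ≃ₗᵢ[ℝ] V)).Finite)
    (hfix : ∀ v : V, (∀ g ∈ G, g v = v) → v = 0)
    (L : Submodule ℝ V) (hLdim : Module.finrank ℝ L = 1) :
    (let Γ : Set (V ≃ₗᵢ[ℝ] V) :=
       {g | g ∈ G ∧ L.map (g : V ≃ₗᵢ[ℝ] V).toLinearEquiv.toLinearMap = L}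
     let Vc := ℂ ⊗[ℝ] V
     let Lc : Set Vc := ((L.baseChange ℂ : Submodule ℂ Vc) : Set Vc)
     -- `ℂ[L_ℂ]^Γ`, the `Γ`-invariant polynomial functions on `L_ℂ`
     let CLΓ : Subalgebra ℂ (Lc → ℂ) :=
       (polyFuns Vc).map (resAlg Lc) ⊓
         invFns {f : Vc → Vc | ∃ g ∈ Γ,
           f = ⇑(LinearMap.baseChange ℂ (g : V ≃ₗᵢ[ℝ] V).toLinearEquiv.toLinearMap)} Lc
     -- the restriction map `ℂ[V_ℂ]^G → ℂ[L_ℂ]^Γ` is surjective iff `Γ` acts nontrivially on `L`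
     ((∀ f ∈ CLΓ, ∃ F ∈ polyFuns Vc,
        (∀ g ∈ G, ∀ x : Vc,
           F (LinearMap.baseChange ℂ (g : V ≃ₗᵢ[ℝ] V).toLinearEquiv.toLinearMap x) = F x) ∧
        resAlg Lc F = f) ↔
      (∃ g ∈ Γ, ∃ x ∈ L, g x ≠ x)) ∧
     -- in which case every element of `Γ` acts on `L` as the identity or as `-1`
     ((∃ g ∈ Γ, ∃ x ∈ L, g x ≠ x) →
        ∀ g ∈ Γ, (∀ x ∈ L, g x = x) ∨ (∀ x ∈ L, g x = -x))) := by
  intro Γ Vc Lc CLΓ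
  -- ### basic setup
  obtain ⟨v₀, hv₀ne, hv₀span⟩ := finrank_eq_one_iff'.mp hLdim
  set x₀ : V := (v₀ : V) with hx₀def
  have hx₀L : x₀ ∈ L := v₀.2
  have hx₀ne : x₀ ≠ 0 := fun h => hv₀ne (Subtype.ext h)
  have hspan : ∀ y ∈ L, ∃ s : ℝ, s • x₀ = y := by
    intro y hy
    obtain ⟨c, hc⟩ := hv₀span ⟨y, hy⟩
    exact ⟨c, congrArg Subtype.val hc⟩
  set φ : V →ₗ[ℝ] ℝ := (‖x₀‖ ^ 2)⁻¹ • (innerSL ℝ x₀).toLinearMap with hφdef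
  have hφx₀ : φ x₀ = 1 := by
    simp only [hφdef, LinearMap.smul_apply, ContinuousLinearMap.coe_coe, innerSL_apply_apply,
      real_inner_self_eq_norm_sq, smul_eq_mul]
    exact inv_mul_cancel₀ (pow_ne_zero 2 (norm_ne_zero_iff.mpr hx₀ne))
  set ℓ : Vc →ₗ[ℂ] ℂ :=
    (Algebra.TensorProduct.rid ℝ ℂ ℂ).toLinearMap ∘ₗ LinearMap.baseChange ℂ φ with hℓdef
  have hℓt : ∀ (c : ℂ) (x : V), ℓ (c ⊗ₜ[ℝ] x) = φ x • c := by
    intro c x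
    rw [hℓdef]
    simp only [LinearMap.coe_comp, Function.comp_apply, AlgEquiv.toLinearMap_apply]
    erw [LinearMap.baseChange_tmul, Algebra.TensorProduct.rid_tmul]
  set e : Vc := (1 : ℂ) ⊗ₜ[ℝ] x₀ with hedef
  have heLc : e ∈ L.baseChange ℂ := Submodule.tmul_mem_baseChange_of_mem 1 hx₀L
  have hℓe : ℓ e = 1 := by rw [hedef, hℓt, hφx₀, one_smul]
  have hrep : ∀ x ∈ L.baseChange ℂ, x = ℓ x • e := by
    intro x hx
    have hker : L.baseChange ℂ ≤ LinearMap.ker (LinearMap.id - ℓ.smulRight e) := by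
      rw [Submodule.baseChange_eq_span, Submodule.span_le]
      rintro - ⟨y, hy, rfl⟩
      obtain ⟨s, rfl⟩ := hspan y hy
      simp only [SetLike.mem_coe, LinearMap.mem_ker, LinearMap.sub_apply, LinearMap.id_apply,
        LinearMap.smulRight_apply, TensorProduct.mk_apply, sub_eq_zero]
      rw [hℓt, map_smul, hφx₀, smul_eq_mul, mul_one, TensorProduct.tmul_smul, smul_assoc,
        one_smul]
    have := hker hx
    rw [LinearMap.mem_ker, LinearMap.sub_apply, LinearMap.id_apply, LinearMap.smulRight_apply,
      sub_eq_zero] at this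
    exact this
  -- base-changed maps
  set gc : (V ≃ₗᵢ[ℝ] V) → (Vc →ₗ[ℂ] Vc) :=
    fun g => LinearMap.baseChange ℂ g.toLinearEquiv.toLinearMap with hgcdef
  have hgct : ∀ (g : V ≃ₗᵢ[ℝ] V) (c : ℂ) (x : V), gc g (c ⊗ₜ[ℝ] x) = c ⊗ₜ[ℝ] g x := by
    intro g c x
    simp only [hgcdef, LinearMap.baseChange_tmul]
    rfl
  have hgc_mul : ∀ g h : V ≃ₗᵢ[ℝ] V, ∀ x : Vc, gc g (gc h x) = gc (g * h) x := by
    intro g h x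
    have : gc (g * h) = (gc g).comp (gc h) := by
      rw [hgcdef]
      dsimp only
      rw [← LinearMap.baseChange_comp]
      rfl
    rw [this]; rfl
  have hgce : ∀ g : V ≃ₗᵢ[ℝ] V, gc g e = (1 : ℂ) ⊗ₜ[ℝ] (g x₀) := by
    intro g
    rw [hedef]
    exact hgct g 1 x₀
  have hℓgc : ∀ (g : V ≃ₗᵢ[ℝ] V), ∀ x ∈ L.baseChange ℂ,
      ℓ (gc g x) = ℓ x * ((φ (g x₀) : ℝ) : ℂ) := by
    intro g x hx
    conv_lhs => rw [hrep x hx]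
    rw [map_smul, hedef, hgct, map_smul, hℓt, smul_eq_mul, Complex.real_smul, mul_one]
  -- the finite group as a finset
  set Gfin : Finset (V ≃ₗᵢ[ℝ] V) := hGfin.toFinset with hGfindef
  have hmemGfin : ∀ g : V ≃ₗᵢ[ℝ] V, g ∈ Gfin ↔ g ∈ G := by
    intro g; rw [hGfindef, Set.Finite.mem_toFinset]; rfl
  have h1Gfin : (1 : V ≃ₗᵢ[ℝ] V) ∈ Gfin := (hmemGfin 1).mpr G.one_mem
  have hreindex : ∀ (g : V ≃ₗᵢ[ℝ] V), g ∈ G → ∀ (ψ : (V ≃ₗᵢ[ℝ] V) → ℂ),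
      ∑ h ∈ Gfin, ψ (h * g) = ∑ h ∈ Gfin, ψ h := by
    intro g hg ψ
    refine Finset.sum_nbij' (fun h => h * g) (fun h => h * g⁻¹) ?_ ?_ ?_ ?_ ?_
    · intro a ha; rw [hmemGfin] at ha ⊢; exact G.mul_mem ha hg
    · intro a ha; rw [hmemGfin] at ha ⊢; exact G.mul_mem ha (G.inv_mem hg)
    · intro a _; group
    · intro a _; group
    · intro a _; rfl
  -- ### the dichotomy
  have hdich : ∀ g ∈ Γ, (∀ x ∈ L, g x = x) ∨ (∀ x ∈ L, g x = -x) := by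
    intro g hg
    obtain ⟨hgG, hgL⟩ := hg
    have hgx₀L : g x₀ ∈ L := by
      rw [← hgL]; exact Submodule.mem_map_of_mem hx₀L
    obtain ⟨c, hc⟩ := hspan (g x₀) hgx₀L
    have hnorm : ‖g x₀‖ = ‖x₀‖ := g.norm_map x₀
    have habs : |c| = 1 := by
      rw [← hc, norm_smul, Real.norm_eq_abs] at hnorm
      have := norm_ne_zero_iff.mpr hx₀ne
      field_simp at hnorm
      exact hnorm
    have hgen : ∀ x ∈ L, g x = c • x := by
      intro x hx
      obtain ⟨s, rfl⟩ := hspan x hx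
      rw [map_smul, ← hc, smul_smul, smul_smul, mul_comm]
    rcases (abs_eq (by norm_num : (0:ℝ) ≤ 1)).mp habs with h1 | h1
    · left; intro x hx; rw [hgen x hx, h1, one_smul]
    · right; intro x hx; rw [hgen x hx, h1, neg_smul, one_smul]
  -- coordinate function on the line
  set coordFun : Lc → ℂ := fun x => ℓ (x : Vc) with hcoorddef
  -- restriction of any polynomial function lands in the adjoin of the coordinate
  have hresmem : ∀ F ∈ polyFuns Vc, (resAlg Lc) F ∈ Algebra.adjoin ℂ {coordFun} := by
    intro F hF
    refine Algebra.adjoin_induction ?_ ?_ ?_ ?_ hF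
    · rintro F ⟨ψ, rfl⟩
      have hre : resAlg Lc ⇑ψ = ψ e • coordFun := by
        funext x
        show ψ (x : Vc) = ψ e * ℓ (x : Vc)
        conv_lhs => rw [hrep _ x.2]
        rw [map_smul, smul_eq_mul, mul_comm]
      rw [hre]
      exact Subalgebra.smul_mem _ (Algebra.subset_adjoin (Set.mem_singleton _)) _
    · intro r
      rw [AlgHom.commutes]
      exact Subalgebra.algebraMap_mem _ r
    · intro F₁ F₂ _ _ h₁ h₂
      rw [map_add]; exact add_mem h₁ h₂
    · intro F₁ F₂ _ _ h₁ h₂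
      rw [map_mul]; exact mul_mem h₁ h₂
  -- evaluation of `aeval` at a point
  have hevalaeval : ∀ (p : Polynomial ℂ) (h : Lc → ℂ) (x : Lc),
      (Polynomial.aeval h p) x = Polynomial.eval (h x) p := by
    intro p h x
    have h1 := Polynomial.aeval_algHom_apply (Pi.evalAlgHom ℂ (fun _ : Lc => ℂ) x) h p
    have h2 : (Pi.evalAlgHom ℂ (fun _ : Lc => ℂ) x) ((Polynomial.aeval h) p)
        = (Polynomial.aeval h p) x := rfl
    rw [h2] at h1
    rw [← h1]
    rw [Polynomial.coe_aeval_eq_eval]; rfl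
  -- the real sums
  set Sr : ℕ → ℝ := fun k => ∑ g ∈ Gfin, (φ (g x₀)) ^ k with hSrdef
  have hSrpos : ∀ k, Even k → 0 < Sr k := by
    intro k hk
    have h1 : (φ ((1 : V ≃ₗᵢ[ℝ] V) x₀)) ^ k = 1 := by
      show (φ x₀) ^ k = 1
      rw [hφx₀, one_pow]
    show (0:ℝ) < ∑ g ∈ Gfin, (φ (g x₀)) ^ k
    calc (0:ℝ) < 1 := one_pos
    _ = (φ ((1 : V ≃ₗᵢ[ℝ] V) x₀)) ^ k := h1.symm
    _ ≤ ∑ g ∈ Gfin, (φ (g x₀)) ^ k :=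
      Finset.single_le_sum (f := fun g : V ≃ₗᵢ[ℝ] V => (φ (g x₀)) ^ k)
        (fun g _ => hk.pow_nonneg _) h1Gfin
  -- the averaged power functions
  set Fk : ℕ → (Vc → ℂ) := fun k => ∑ g ∈ Gfin, (⇑(ℓ ∘ₗ gc g)) ^ k with hFkdef
  have hFkapp : ∀ k (x : Vc), Fk k x = ∑ g ∈ Gfin, (ℓ (gc g x)) ^ k := by
    intro k x
    rw [hFkdef]
    simp [Finset.sum_apply]
  have hFkpoly : ∀ k, Fk k ∈ polyFuns Vc := by
    intro k
    refine Subalgebra.sum_mem _ fun g _ => pow_mem ?_ k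
    exact Algebra.subset_adjoin
      (show ⇑(ℓ ∘ₗ gc g) ∈ {h : Vc → ℂ | ∃ ψ : Vc →ₗ[ℂ] ℂ, ⇑ψ = h} from ⟨ℓ ∘ₗ gc g, rfl⟩)
  have hFkinv : ∀ k, ∀ g ∈ G, ∀ x : Vc, Fk k (gc g x) = Fk k x := by
    intro k g hg x
    calc Fk k (gc g x) = ∑ h ∈ Gfin, (ℓ (gc (h * g) x)) ^ k := by
          rw [hFkapp]
          exact Finset.sum_congr rfl fun h _ => by rw [hgc_mul]
    _ = ∑ h ∈ Gfin, (ℓ (gc h x)) ^ k := hreindex g hg (fun h => (ℓ (gc h x)) ^ k)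
    _ = Fk k x := (hFkapp k x).symm
  have hFkres : ∀ k, ∀ x ∈ L.baseChange ℂ, Fk k x = ((Sr k : ℝ) : ℂ) * (ℓ x) ^ k := by
    intro k x hx
    rw [hFkapp, hSrdef]
    push_cast
    rw [Finset.sum_mul]
    refine Finset.sum_congr rfl fun g _ => ?_
    rw [hℓgc g x hx, mul_pow, mul_comm]
  -- ### the two directions
  refine ⟨⟨fun hsurj => ?_, fun hex => ?_⟩, fun _ => hdich⟩
  · -- surjectivity implies nontrivial action
    by_contra hnex
    push_neg at hnex
    have hcoordmem : coordFun ∈ CLΓ := by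
      refine ⟨⟨⇑ℓ, Algebra.subset_adjoin ⟨ℓ, rfl⟩, rfl⟩, ?_⟩
      rintro t ⟨g, hgΓ, rfl⟩ x y hxy
      have hfixe : gc g e = e := by
        rw [hgce, hnex g hgΓ x₀ hx₀L, hedef]
      have hfixx : gc g (x : Vc) = (x : Vc) := by
        conv_lhs => rw [hrep _ x.2]
        rw [map_smul, hfixe, ← hrep _ x.2]
      have hyx : (y : Vc) = (x : Vc) := by
        rw [← hxy]; exact hfixx
      show ℓ (y : Vc) = ℓ (x : Vc)
      rw [hyx]
    obtain ⟨F, hFpoly, hFinv, hFres⟩ := hsurj coordFun hcoordmem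
    -- extract the linear term of `F` via differentiation at the origin
    have hD : ∃ ψ : Vc →ₗ[ℂ] ℂ, ∀ v : Vc, HasDerivAt (fun s : ℂ => F (s • v)) (ψ v) 0 := by
      refine Algebra.adjoin_induction ?_ ?_ ?_ ?_ hFpoly
      · rintro F ⟨ψ₀, rfl⟩
        refine ⟨ψ₀, fun v => ?_⟩
        have h2 : (fun s : ℂ => ψ₀ (s • v)) = fun s : ℂ => s * ψ₀ v :=
          funext fun s => by rw [map_smul, smul_eq_mul]
        rw [h2]
        exact hasDerivAt_mul_const _
      · intro r
        exact ⟨0, fun v => hasDerivAt_const 0 _⟩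
      · rintro F₁ F₂ _ _ ⟨ψ₁, h₁⟩ ⟨ψ₂, h₂⟩
        exact ⟨ψ₁ + ψ₂, fun v => (h₁ v).add (h₂ v)⟩
      · rintro F₁ F₂ _ _ ⟨ψ₁, h₁⟩ ⟨ψ₂, h₂⟩
        refine ⟨F₂ 0 • ψ₁ + F₁ 0 • ψ₂, fun v => ?_⟩
        have h := (h₁ v).mul (h₂ v)
        rw [zero_smul] at h
        have hval : (F₂ 0 • ψ₁ + F₁ 0 • ψ₂) v = ψ₁ v * F₂ 0 + F₁ 0 * ψ₂ v := by
          simp [mul_comm]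
        rw [hval]
        exact h
    obtain ⟨ψ, hψ⟩ := hD
    have hψinv : ∀ g ∈ G, ∀ v : Vc, ψ (gc g v) = ψ v := by
      intro g hg v
      have h1 := hψ (gc g v)
      have h2 : (fun s : ℂ => F (s • gc g v)) = fun s : ℂ => F (s • v) := by
        funext s
        rw [← map_smul]
        exact hFinv g hg (s • v)
      rw [h2] at h1
      exact h1.unique (hψ v)
    have hψe : ψ e = 1 := by
      have h1 := hψ e
      have h2 : (fun s : ℂ => F (s • e)) = fun s : ℂ => s := by
        funext s
        have hse : s • e ∈ L.baseChange ℂ := Submodule.smul_mem _ s heLc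
        have h3 : F (s • e) = coordFun ⟨s • e, hse⟩ := by rw [← hFres]; rfl
        rw [h3]
        show ℓ (s • e) = s
        rw [map_smul, hℓe, smul_eq_mul, mul_one]
      rw [h2] at h1
      exact h1.unique (hasDerivAt_id' 0)
    set w : V := ∑ g ∈ Gfin, g x₀ with hwdef
    have hwfix : ∀ h ∈ G, h w = w := by
      intro h hh
      rw [hwdef, map_sum]
      refine Finset.sum_nbij' (fun g => h * g) (fun g => h⁻¹ * g) ?_ ?_ ?_ ?_ ?_
      · intro a ha; rw [hmemGfin] at ha ⊢; exact G.mul_mem hh ha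
      · intro a ha; rw [hmemGfin] at ha ⊢; exact G.mul_mem (G.inv_mem hh) ha
      · intro a _; group
      · intro a _; group
      · intro a _; rfl
    have hw0 : w = 0 := hfix w hwfix
    have hcontra : ((Gfin.card : ℕ) : ℂ) = 0 := by
      have h1 : ψ ((1 : ℂ) ⊗ₜ[ℝ] w) = 0 := by
        rw [hw0, TensorProduct.tmul_zero, map_zero]
      rw [hwdef, TensorProduct.tmul_sum, map_sum] at h1
      have h2 : ∀ g ∈ Gfin, ψ ((1 : ℂ) ⊗ₜ[ℝ] (g x₀)) = 1 := by
        intro g hg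
        rw [← hgce g, hψinv g ((hmemGfin g).mp hg) e, hψe]
      rw [Finset.sum_congr rfl h2, Finset.sum_const, nsmul_eq_mul, mul_one] at h1
      exact h1
    have hGcard : Gfin.card ≠ 0 := Finset.card_ne_zero_of_mem h1Gfin
    exact hGcard (by exact_mod_cast hcontra)
  · -- nontrivial action implies surjectivity
    intro f hf
    obtain ⟨γ, hγΓ, x', hx'L, hγx'⟩ := hex
    have hγneg : ∀ x ∈ L, γ x = -x := by
      rcases hdich γ hγΓ with h | h
      · exact absurd (h x' hx'L) hγx'
      · exact h
    have hγcneg : ∀ x ∈ L.baseChange ℂ, gc γ x = -x := by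
      intro x hx
      conv_lhs => rw [hrep x hx]
      rw [map_smul, hgce, hγneg x₀ hx₀L, TensorProduct.tmul_neg, ← hedef, smul_neg,
        ← hrep x hx]
    obtain ⟨F₀, hF₀poly, hF₀res⟩ := hf.1
    have hfadre : f ∈ Algebra.adjoin ℂ {coordFun} := hF₀res ▸ hresmem F₀ hF₀poly
    rw [Algebra.adjoin_singleton_eq_range_aeval] at hfadre
    obtain ⟨p, hp⟩ := hfadre
    have hfeval : ∀ x : Lc, f x = Polynomial.eval (ℓ (x : Vc)) p := by
      intro x
      rw [← hp]
      exact hevalaeval p coordFun x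
    have hpe : ∀ c : ℂ, Polynomial.eval (-c) p = Polynomial.eval c p := by
      intro c
      have hce : c • e ∈ L.baseChange ℂ := Submodule.smul_mem _ c heLc
      have hnce : -(c • e) ∈ L.baseChange ℂ := neg_mem hce
      have h1 := hf.2 (⇑(gc γ)) ⟨γ, hγΓ, rfl⟩ ⟨c • e, hce⟩ ⟨-(c • e), hnce⟩ (hγcneg _ hce)
      rw [hfeval, hfeval] at h1
      have h2 : ℓ (-(c • e)) = -c := by
        rw [map_neg, map_smul, hℓe, smul_eq_mul, mul_one]
      have h3 : ℓ (c • e) = c := by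
        rw [map_smul, hℓe, smul_eq_mul, mul_one]
      rw [h2, h3] at h1
      exact h1
    have hpcomp : p.comp (-Polynomial.X) = p := by
      refine Polynomial.funext fun c => ?_
      rw [Polynomial.eval_comp, Polynomial.eval_neg, Polynomial.eval_X]
      exact hpe c
    have hodd : ∀ k ∈ p.support, Even k := by
      intro k hk
      by_contra hkodd
      have hko : Odd k := Nat.odd_iff.mpr (Nat.not_even_iff.mp hkodd)
      have h1 := coeff_comp_neg_X p k
      rw [hpcomp, hko.neg_one_pow, neg_one_mul] at h1
      have h2 : p.coeff k = 0 := by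
        have h3 : p.coeff k + p.coeff k = 0 := by linear_combination h1
        exact add_self_eq_zero.mp h3
      exact Polynomial.mem_support_iff.mp hk h2
    -- the invariant lift
    refine ⟨∑ k ∈ p.support, p.coeff k • ((((Sr k : ℝ) : ℂ))⁻¹ • Fk k), ?_, ?_, ?_⟩
    · exact Subalgebra.sum_mem _ fun k _ =>
        Subalgebra.smul_mem _ (Subalgebra.smul_mem _ (hFkpoly k) _) _
    · intro g hg x
      show (∑ k ∈ p.support, p.coeff k • ((((Sr k : ℝ) : ℂ))⁻¹ • Fk k)) (gc g x)
        = (∑ k ∈ p.support, p.coeff k • ((((Sr k : ℝ) : ℂ))⁻¹ • Fk k)) x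
      simp only [Finset.sum_apply, Pi.smul_apply]
      exact Finset.sum_congr rfl fun k _ => by rw [hFkinv k g hg x]
    · funext x
      show (∑ k ∈ p.support, p.coeff k • ((((Sr k : ℝ) : ℂ))⁻¹ • Fk k)) (x : Vc) = f x
      rw [hfeval x, Polynomial.eval_eq_sum, Polynomial.sum_def]
      simp only [Finset.sum_apply, Pi.smul_apply, smul_eq_mul]
      refine Finset.sum_congr rfl fun k hk => ?_
      rw [hFkres k (x : Vc) x.2]
      have hSne : (((Sr k : ℝ)) : ℂ) ≠ 0 :=
        Complex.ofReal_ne_zero.mpr (ne_of_gt (hSrpos k (hodd k hk)))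
      field_simp
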